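/- For the 2×2 case (all B_n traceless 2×2 matrices), under the symmetrized Schlesinger equations with B_0 = 0, the modified Hamiltonians satisfy the generalized Okamoto equation: (1/8)( L_2L_2Ĥ_2 + 2 L_3Ĥ_3 - 5 L_4Ĥ_2 - 2 Ĥ_6 )^2 = (L_3Ĥ_3 - L_4Ĥ_2 - Ĥ_6)·( (Ĥ_3)^2 + 4 Ĥ_2 (L_2Ĥ_2 - Ĥ_4) ) - (L_3Ĥ_2 - Ĥ_5)·( Ĥ_2 L_3Ĥ_2 + Ĥ_3 L_2Ĥ_2 - Ĥ_2 Ĥ_5 ) + (L_2Ĥ_2 - Ĥ_4)(L_2Ĥ_2)^2. -/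

import Mathlib

open Matrix

/-- The generalized Okamoto equation (third order, cubic nonlinearity) for an arbitrary
`2×2` Schlesinger system, in terms of the modified Hamiltonians
`Ĥ_n := -(1/4) ∑_{k=0}^n tr(B_k B_{n-k})` and the Virasoro generators `L_m`:
`(1/8)(L₂L₂Ĥ₂ + 2L₃Ĥ₃ - 5L₄Ĥ₂ - 2Ĥ₆)² = (L₃Ĥ₃ - L₄Ĥ₂ - Ĥ₆)(Ĥ₃² + 4Ĥ₂(L₂Ĥ₂ - Ĥ₄))
  - (L₃Ĥ₂ - Ĥ₅)(Ĥ₂L₃Ĥ₂ + Ĥ₃L₂Ĥ₂ - Ĥ₂Ĥ₅) + (L₂Ĥ₂ - Ĥ₄)(L₂Ĥ₂)²`,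
products of scalar functions being taken pointwise. -/
theorem generalized_okamoto_third_order {X : Type*}
    (B : ℤ → X → Matrix (Fin 2) (Fin 2) ℂ) (hB0 : B 0 = 0)
    (hTr0 : ∀ n : ℤ, ∀ x, (B n x).trace = 0)
    (Lm : ℤ → (X → Matrix (Fin 2) (Fin 2) ℂ) →ₗ[ℂ] (X → Matrix (Fin 2) (Fin 2) ℂ))
    (Ls : ℤ → (X → ℂ) →ₗ[ℂ] (X → ℂ))
    (hLeib : ∀ m : ℤ, -1 ≤ m → ∀ F G : X → Matrix (Fin 2) (Fin 2) ℂ,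
      Lm m (F * G) = Lm m F * G + F * Lm m G)
    (hTr : ∀ m : ℤ, -1 ≤ m → ∀ F : X → Matrix (Fin 2) (Fin 2) ℂ,
      Ls m (fun x => (F x).trace) = fun x => ((Lm m F) x).trace)
    (hVir : ∀ m n : ℤ, -1 ≤ m → -1 ≤ n → ∀ g : X → ℂ,
      Ls m (Ls n g) - Ls n (Ls m g) = ((n - m : ℤ) : ℂ) • Ls (m + n) g)
    (hSch : ∀ m n : ℤ, -1 ≤ m → 1 ≤ n →
      Lm m (B n) = (∑ k ∈ Finset.Icc 1 (n - 1),
          (B k * B (m + n - k) - B (m + n - k) * B k)) + (n : ℂ) • B (m + n))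
    (H : ℤ → X → ℂ)
    (hH : ∀ n, H n = fun x => -(1/4 : ℂ) * ∑ k ∈ Finset.Icc 0 n, (B k x * B (n - k) x).trace) :
    (1/8 : ℂ) •
        ((Ls 2 (Ls 2 (H 2)) + (2 : ℂ) • Ls 3 (H 3) - (5 : ℂ) • Ls 4 (H 2) - (2 : ℂ) • H 6) *
         (Ls 2 (Ls 2 (H 2)) + (2 : ℂ) • Ls 3 (H 3) - (5 : ℂ) • Ls 4 (H 2) - (2 : ℂ) • H 6)) =
      (Ls 3 (H 3) - Ls 4 (H 2) - H 6) *
          (H 3 * H 3 + (4 : ℂ) • (H 2 * (Ls 2 (H 2) - H 4)))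
        - (Ls 3 (H 2) - H 5) *
          (H 2 * Ls 3 (H 2) + H 3 * Ls 2 (H 2) - H 2 * H 5)
        + (Ls 2 (H 2) - H 4) * (Ls 2 (H 2) * Ls 2 (H 2)) := by
  -- Values of the Virasoro generators on the matrices `B n`, from the Schlesinger equations.
  have l1 : ∀ m : ℤ, -1 ≤ m → Lm m (B 1) = B (m + 1) := by
    intro m hm
    have h := hSch m 1 hm le_rfl
    rw [show (1:ℤ) - 1 = 0 from rfl, Finset.Icc_eq_empty (by norm_num), Finset.sum_empty,
      zero_add] at h
    simpa using h
  have l12 : Lm 2 (B 1) = B 3 := by have := l1 2 (by norm_num); norm_num at this; exact this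
  have l13 : Lm 3 (B 1) = B 4 := by have := l1 3 (by norm_num); norm_num at this; exact this
  have l14 : Lm 4 (B 1) = B 5 := by have := l1 4 (by norm_num); norm_num at this; exact this
  have l2 : Lm 3 (B 2) = (B 1 * B 4 - B 4 * B 1) + (2:ℂ) • B 5 := by
    have h := hSch 3 2 (by norm_num) (by norm_num)
    rw [show (2:ℤ) - 1 = 1 from rfl, Finset.Icc_self, Finset.sum_singleton] at h
    norm_num at h
    exact h
  have l3 : Lm 2 (B 3) = ((B 1 * B 4 - B 4 * B 1) + (B 2 * B 3 - B 3 * B 2)) + (3:ℂ) • B 5 := by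
    have h := hSch 2 3 (by norm_num) (by norm_num)
    rw [show (3:ℤ) - 1 = 2 from rfl, show Finset.Icc (1:ℤ) 2 = {1, 2} from by decide] at h
    rw [Finset.sum_insert (by decide), Finset.sum_singleton] at h
    norm_num at h
    exact h
  -- Explicit pointwise formulas for the Hamiltonians.
  have h2f : H 2 = fun x => (((-(1/4) : ℂ) • (B 1 * B 1)) x).trace := by
    funext x
    simp only [hH]
    rw [show Finset.Icc (0:ℤ) 2 = {0,1,2} from by decide]
    rw [Finset.sum_insert (by decide), Finset.sum_insert (by decide), Finset.sum_singleton]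
    norm_num [hB0]
  have h3f : H 3 = fun x => (((-(1/4) : ℂ) • (B 1 * B 2 + B 2 * B 1)) x).trace := by
    funext x
    simp only [hH]
    rw [show Finset.Icc (0:ℤ) 3 = {0,1,2,3} from by decide]
    rw [Finset.sum_insert (by decide), Finset.sum_insert (by decide),
      Finset.sum_insert (by decide), Finset.sum_singleton]
    norm_num [hB0]
    ring
  have h4f : H 4 = fun x => -(1/4 : ℂ) * ((B 1 x * B 3 x).trace + (B 2 x * B 2 x).trace
      + (B 3 x * B 1 x).trace) := by
    funext x
    simp only [hH]
    rw [show Finset.Icc (0:ℤ) 4 = {0,1,2,3,4} from by decide]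
    rw [Finset.sum_insert (by decide), Finset.sum_insert (by decide),
      Finset.sum_insert (by decide), Finset.sum_insert (by decide), Finset.sum_singleton]
    norm_num [hB0]
    ring
  have h5f : H 5 = fun x => -(1/4 : ℂ) * ((B 1 x * B 4 x).trace + (B 2 x * B 3 x).trace
      + (B 3 x * B 2 x).trace + (B 4 x * B 1 x).trace) := by
    funext x
    simp only [hH]
    rw [show Finset.Icc (0:ℤ) 5 = {0,1,2,3,4,5} from by decide]
    rw [Finset.sum_insert (by decide), Finset.sum_insert (by decide),
      Finset.sum_insert (by decide), Finset.sum_insert (by decide),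
      Finset.sum_insert (by decide), Finset.sum_singleton]
    norm_num [hB0]
    ring
  have h6f : H 6 = fun x => -(1/4 : ℂ) * ((B 1 x * B 5 x).trace + (B 2 x * B 4 x).trace
      + (B 3 x * B 3 x).trace + (B 4 x * B 2 x).trace + (B 5 x * B 1 x).trace) := by
    funext x
    simp only [hH]
    rw [show Finset.Icc (0:ℤ) 6 = {0,1,2,3,4,5,6} from by decide]
    rw [Finset.sum_insert (by decide), Finset.sum_insert (by decide),
      Finset.sum_insert (by decide), Finset.sum_insert (by decide),
      Finset.sum_insert (by decide), Finset.sum_insert (by decide), Finset.sum_singleton]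
    norm_num [hB0]
    ring
  -- `Ls` acting on a trace of a matrix-valued function, via `hTr` and linearity.
  have key : ∀ m : ℤ, -1 ≤ m → ∀ F : X → Matrix (Fin 2) (Fin 2) ℂ,
      Ls m (fun x => (((-(1/4) : ℂ) • F) x).trace)
        = fun x => (((-(1/4) : ℂ) • Lm m F) x).trace := by
    intro m hm F
    have h1 : (fun x => (((-(1/4) : ℂ) • F) x).trace)
        = (-(1/4) : ℂ) • fun x => (F x).trace := by
      funext x; simp
    rw [h1, _root_.map_smul, hTr m hm F]
    funext x; simp
  -- The Virasoro derivatives appearing in the Okamoto equation.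
  have m1 : Lm 2 (B 1 * B 1) = B 3 * B 1 + B 1 * B 3 := by
    rw [hLeib 2 (by norm_num), l12]
  have e2 : Ls 2 (H 2) = fun x => (((-(1/4) : ℂ) • (B 3 * B 1 + B 1 * B 3)) x).trace := by
    rw [h2f, key 2 (by norm_num), m1]
  have m2 : Lm 2 (B 3 * B 1 + B 1 * B 3)
      = ((((B 1 * B 4 - B 4 * B 1) + (B 2 * B 3 - B 3 * B 2)) + (3:ℂ) • B 5) * B 1 + B 3 * B 3)
        + (B 3 * B 3
          + B 1 * (((B 1 * B 4 - B 4 * B 1) + (B 2 * B 3 - B 3 * B 2)) + (3:ℂ) • B 5)) := by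
    rw [map_add, hLeib 2 (by norm_num), hLeib 2 (by norm_num), l3, l12]
  have e22 : Ls 2 (Ls 2 (H 2)) = fun x => (((-(1/4) : ℂ) •
      (((((B 1 * B 4 - B 4 * B 1) + (B 2 * B 3 - B 3 * B 2)) + (3:ℂ) • B 5) * B 1 + B 3 * B 3)
        + (B 3 * B 3
          + B 1 * (((B 1 * B 4 - B 4 * B 1) + (B 2 * B 3 - B 3 * B 2)) + (3:ℂ) • B 5)))) x).trace := by
    rw [e2, key 2 (by norm_num), m2]
  have m3 : Lm 3 (B 1 * B 2 + B 2 * B 1)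
      = (B 4 * B 2 + B 1 * ((B 1 * B 4 - B 4 * B 1) + (2:ℂ) • B 5))
        + (((B 1 * B 4 - B 4 * B 1) + (2:ℂ) • B 5) * B 1 + B 2 * B 4) := by
    rw [map_add, hLeib 3 (by norm_num), hLeib 3 (by norm_num), l2, l13]
  have e33 : Ls 3 (H 3) = fun x => (((-(1/4) : ℂ) •
      ((B 4 * B 2 + B 1 * ((B 1 * B 4 - B 4 * B 1) + (2:ℂ) • B 5))
        + (((B 1 * B 4 - B 4 * B 1) + (2:ℂ) • B 5) * B 1 + B 2 * B 4))) x).trace := by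
    rw [h3f, key 3 (by norm_num), m3]
  have m4 : Lm 4 (B 1 * B 1) = B 5 * B 1 + B 1 * B 5 := by
    rw [hLeib 4 (by norm_num), l14]
  have e42 : Ls 4 (H 2) = fun x => (((-(1/4) : ℂ) • (B 5 * B 1 + B 1 * B 5)) x).trace := by
    rw [h2f, key 4 (by norm_num), m4]
  have m5 : Lm 3 (B 1 * B 1) = B 4 * B 1 + B 1 * B 4 := by
    rw [hLeib 3 (by norm_num), l13]
  have e32 : Ls 3 (H 2) = fun x => (((-(1/4) : ℂ) • (B 4 * B 1 + B 1 * B 4)) x).trace := by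
    rw [h2f, key 3 (by norm_num), m5]
  -- Reduce to a pointwise polynomial identity on matrix entries.
  rw [e22, e33, e42, e32, e2, h2f, h3f, h4f, h5f, h6f]
  funext x
  have hd : ∀ n : ℤ, B n x 1 1 = -(B n x 0 0) := by
    intro n
    have h := hTr0 n x
    rw [Matrix.trace_fin_two] at h
    linear_combination h
  simp only [Pi.smul_apply, Pi.add_apply, Pi.sub_apply, Pi.mul_apply, smul_eq_mul,
    Matrix.smul_apply, Matrix.add_apply, Matrix.sub_apply, Matrix.mul_apply,
    Matrix.trace_fin_two, Fin.sum_univ_two, hd]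
  ring
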